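/- Let (Ω, μ) be a probability space, ν ≪ μ with density ρ = dν/dμ, and L = E_ν[log ρ(Y)] the KL-divergence of μ from ν. Then for every t > 0, P_ν(log ρ(Y) ≥ L + t) ≤ (L + 2)/(L + t). -/

import Mathlib

open MeasureTheory

private lemma aux_sub_one_le_mul_log {r : ℝ} (hr : 0 ≤ r) : r - 1 ≤ r * Real.log r := by
  rcases hr.eq_or_lt with h | h
  · simp [← h]
  · have := Real.log_le_sub_one_of_pos (x := 1 / r) (by positivity)
    rw [Real.log_div one_ne_zero h.ne', Real.log_one] at this
    have h2 : -Real.log r ≤ 1 / r - 1 := by linarith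
    have h3 := mul_le_mul_of_nonneg_left h2 h.le
    have h4 : r * (1 / r - 1) = 1 - r := by field_simp
    nlinarith

private lemma aux_mul_negpart_log_le_one {r : ℝ} (hr : 0 ≤ r) :
    r * max (-Real.log r) 0 ≤ 1 := by
  rcases hr.eq_or_lt with h | h
  · simp [← h]
  · rcases le_or_gt (Real.log r) 0 with hl | hl
    · rw [max_eq_left (by linarith)]
      have := Real.log_le_sub_one_of_pos (x := 1 / r) (by positivity)
      rw [Real.log_div one_ne_zero h.ne', Real.log_one] at this
      have h2 : -Real.log r ≤ 1 / r - 1 := by linarith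
      have h3 := mul_le_mul_of_nonneg_left h2 h.le
      have h4 : r * (1 / r - 1) = 1 - r := by field_simp
      nlinarith
    · rw [max_eq_right (by linarith)]
      simp

/-- Markov-type tail bound for the log-density: if `L = E_ν[log ρ]` with `ρ = dν/dμ`,
then for every `t > 0`, `P_ν(log ρ ≥ L + t) ≤ (L+2)/(L+t)`. -/
theorem log_rnDeriv_tail_bound
    {Ω : Type*} [MeasurableSpace Ω] (μ ν : Measure Ω)
    [IsProbabilityMeasure μ] [IsProbabilityMeasure ν] (hν : ν ≪ μ)
    (hint : Integrable (fun x => Real.log ((ν.rnDeriv μ x).toReal)) ν)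
    (L : ℝ) (hL : L = ∫ x, Real.log ((ν.rnDeriv μ x).toReal) ∂ν)
    (t : ℝ) (ht : 0 < t) :
    (ν {x | L + t ≤ Real.log ((ν.rnDeriv μ x).toReal)}).toReal ≤ (L + 2) / (L + t) := by
  set ρ : Ω → ℝ := fun x => (ν.rnDeriv μ x).toReal with hρ
  set f : Ω → ℝ := fun x => Real.log (ρ x) with hf
  have hρnn : ∀ x, 0 ≤ ρ x := fun x => ENNReal.toReal_nonneg
  -- L ≥ 0 (nonnegativity of KL divergence)
  have hLν : L = ∫ x, f x ∂ν := hL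
  have hchange : ∫ x, f x ∂ν = ∫ x, ρ x * f x ∂μ := by
    rw [← integral_rnDeriv_smul hν (f := f)]
    simp [smul_eq_mul]
    rfl
  have hint_mul : Integrable (fun x => ρ x * f x) μ := by
    have := (integrable_rnDeriv_smul_iff hν (f := f)).mpr
    simpa [smul_eq_mul] using this hint
  have hint_rho : Integrable ρ μ := Measure.integrable_toReal_rnDeriv
  have hrho_int : ∫ x, ρ x ∂μ = 1 := by
    rw [hρ, Measure.integral_toReal_rnDeriv hν]
    simp
  have hL0 : 0 ≤ L := by
    rw [hLν, hchange]
    have h1 : ∫ x, (ρ x - 1) ∂μ ≤ ∫ x, ρ x * f x ∂μ := by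
      apply integral_mono (hint_rho.sub (integrable_const 1)) hint_mul
      intro x
      exact aux_sub_one_le_mul_log (hρnn x)
    have h2 : ∫ x, (ρ x - 1) ∂μ = 0 := by
      rw [integral_sub hint_rho (integrable_const 1), hrho_int]
      simp
    linarith
  have hLt : 0 < L + t := by linarith
  -- positive and negative parts
  set g : Ω → ℝ := fun x => max (f x) 0 with hg
  set h : Ω → ℝ := fun x => max (-f x) 0 with hh
  have hg_int : Integrable g ν := hint.pos_part
  have hh_int : Integrable h ν := hint.neg_part
  -- ∫ h dν ≤ 1
  have hh_change : ∫ x, h x ∂ν = ∫ x, ρ x * h x ∂μ := by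
    rw [← integral_rnDeriv_smul hν (f := h)]
    simp [smul_eq_mul]
    rfl
  have hh_mul_int : Integrable (fun x => ρ x * h x) μ := by
    have := (integrable_rnDeriv_smul_iff hν (f := h)).mpr
    simpa [smul_eq_mul] using this hh_int
  have hh_le : ∫ x, h x ∂ν ≤ 1 := by
    rw [hh_change]
    calc ∫ x, ρ x * h x ∂μ ≤ ∫ _x, (1 : ℝ) ∂μ := by
          apply integral_mono hh_mul_int (integrable_const 1)
          intro x
          exact aux_mul_negpart_log_le_one (hρnn x)
      _ = 1 := by simp
  -- ∫ g dν = L + ∫ h dν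
  have hg_eq : ∫ x, g x ∂ν = L + ∫ x, h x ∂ν := by
    have : g = fun x => f x + h x := by
      funext x
      simp only [hg, hh]
      rcases le_total (f x) 0 with hx | hx
      · rw [max_eq_right hx, max_eq_left (by linarith)]; ring
      · rw [max_eq_left hx, max_eq_right (by linarith)]; ring
    rw [this, integral_add hint hh_int, ← hLν]
  have hg_le : ∫ x, g x ∂ν ≤ L + 2 := by
    rw [hg_eq]; linarith
  -- Markov on g
  have hsets : {x | L + t ≤ f x} = {x | L + t ≤ g x} := by
    ext x
    simp only [Set.mem_setOf_eq, hg, le_max_iff]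
    constructor
    · intro hx; exact Or.inl hx
    · rintro (hx | hx)
      · exact hx
      · linarith
  have hmarkov := mul_meas_ge_le_integral_of_nonneg
    (f := g) (μ := ν) (Filter.Eventually.of_forall fun x => le_max_right _ _)
    hg_int (L + t)
  have key : (L + t) * (ν {x | L + t ≤ f x}).toReal ≤ L + 2 := by
    rw [hsets]
    exact hmarkov.trans hg_le
  rw [le_div_iff₀ hLt]
  have : (ν {x | L + t ≤ Real.log ((ν.rnDeriv μ x).toReal)}).toReal
      = (ν {x | L + t ≤ f x}).toReal := rfl
  rw [this]
  linarith
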